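/- Let $r$ be an odd prime power with $-1$ a square in $\mathbb{F}_r$, and let $\rho$ be the quadratic character of $\mathbb{F}_r$ extended by $\rho(0)=0$. For a positive integer $u$ and a sequence $i_1, \ldots, i_{u+1} \in \{0,1\}$, let $\Omega_{i_1 \cdots i_u i_{u+1}}$ be the number of tuples $(x_1,\ldots,x_u) \in (\mathbb{F}_r^*)^u$ with $x_j \in C_{i_j}^{(2,r)}$ for each $j$ and $\sum_j x_j \in C_{i_{u+1}}^{(2,r)}$. Then $\Omega_{i_1\cdots i_u i_{u+1}} = \frac{r-1}{2^{u+1}}\Big\{\frac{(r-1)^u - (-1)^u}{r} - (-1)^u \sum_{1 \le l \le (u+1)/2} r^{l-1} \sum_{1 \le j_1 < \cdots < j_{2l} \le u+1} (-1)^{i_{j_1} + \cdots + i_{j_{2l}}}\Big\}$. -/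

import Mathlib

open Finset

set_option linter.unusedSectionVars false
set_option linter.unnecessarySeqFocus false
set_option maxHeartbeats 1000000



/-- `y` lies in the cyclotomic class `C_c^{(2,r)}`: it is a nonzero square if
`c = 0`, and a nonsquare if `c = 1`. -/
def inClass {F : Type*} [Field F] (y : F) (c : Fin 2) : Prop :=
  y ≠ 0 ∧ (IsSquare y ↔ c = 0)

namespace Stmt19

variable {F : Type*} [Field F] [Fintype F] [DecidableEq F]

noncomputable def qc (y : F) : ℚ := ((quadraticChar F y : ℤ) : ℚ)

noncomputable def nu (y : F) : ℚ := if y = 0 then 0 else 1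

lemma qc_eq (y : F) : qc y = if y = 0 then 0 else if IsSquare y then 1 else -1 := by
  simp only [qc, quadraticChar_apply, quadraticCharFun]
  split_ifs <;> norm_num

lemma qc_zero : qc (0 : F) = 0 := by simp [qc_eq]

lemma qc_mul (x y : F) : qc (x * y) = qc x * qc y := by
  simp only [qc, ← Int.cast_mul, map_mul]

variable (hodd : Odd (Fintype.card F)) (hsq : IsSquare (-1 : F))

include hodd in
lemma char_ne_two : ringChar F ≠ 2 := by
  intro h
  have h2 := FiniteField.even_card_iff_char_two.mp h
  obtain ⟨m, hm⟩ := hodd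
  omega

include hodd in
lemma qc_sum : ∑ y : F, qc y = 0 := by
  have := quadraticChar_sum_zero (char_ne_two hodd (F := F))
  unfold qc
  rw [← Int.cast_sum]
  rw [show (∑ y : F, (quadraticChar F y : ℤ)) = 0 from this]
  norm_num

include hsq in
lemma qc_neg_one : qc (-1 : F) = 1 := by
  rw [qc_eq, if_neg (by simp), if_pos hsq]

include hsq in
lemma qc_neg (y : F) : qc (-y) = qc y := by
  rw [show -y = -1 * y by ring, qc_mul, qc_neg_one hsq, one_mul]

lemma qc_sq {y : F} (hy : y ≠ 0) : qc y * qc y = 1 := by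
  rw [qc_eq, if_neg hy]; split_ifs <;> norm_num

lemma qc_pow_even {y : F} (hy : y ≠ 0) {k : ℕ} (hk : k % 2 = 0) : qc y ^ k = 1 := by
  obtain ⟨l, rfl⟩ : ∃ l, k = 2 * l := ⟨k / 2, by omega⟩
  rw [pow_mul, pow_two, qc_sq hy, one_pow]

lemma qc_pow_odd {y : F} (hy : y ≠ 0) {k : ℕ} (hk : k % 2 = 1) : qc y ^ k = qc y := by
  obtain ⟨l, rfl⟩ : ∃ l, k = 2 * l + 1 := ⟨k / 2, by omega⟩
  rw [pow_succ, pow_mul, pow_two, qc_sq hy, one_pow, one_mul]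

lemma nu_sum : ∑ y : F, nu y = (Fintype.card F : ℚ) - 1 := by
  have : ∑ y : F, nu y = ∑ y : F, (1 - if y = 0 then (1:ℚ) else 0) := by
    apply Finset.sum_congr rfl; intro y _; unfold nu; split_ifs <;> norm_num
  rw [this, Finset.sum_sub_distrib, Finset.sum_ite_eq' Finset.univ (0:F) (fun _ => (1:ℚ))]
  simp [Finset.card_univ]


lemma qc_one : qc (1:F) = 1 := by rw [qc_eq]; norm_num

lemma qc_inv (s : F) : qc s⁻¹ = qc s := by
  by_cases hs : s = 0
  · simp [hs]
  · have h1 : qc s⁻¹ * qc s = 1 := by rw [← qc_mul, inv_mul_cancel₀ hs, qc_one]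
    have h2 := qc_sq hs
    calc qc s⁻¹ = qc s⁻¹ * (qc s * qc s) := by rw [h2, mul_one]
    _ = (qc s⁻¹ * qc s) * qc s := by ring
    _ = qc s := by rw [h1, one_mul]

include hodd hsq in
lemma jacobi : ∑ s : F, qc s * qc (1 - s) = -1 := by
  have e1 : ∑ s : F, qc s * qc (1 - s)
      = ∑ s ∈ Finset.univ.erase (0:F), qc s * qc (1 - s) := by
    rw [← Finset.add_sum_erase _ _ (Finset.mem_univ (0:F)), qc_zero, zero_mul, zero_add]
  have e2 : ∑ s ∈ Finset.univ.erase (0:F), qc s * qc (1 - s)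
      = ∑ w ∈ Finset.univ.erase (-1:F), qc w := by
    apply Finset.sum_nbij' (fun s => s⁻¹ - 1) (fun w => (w + 1)⁻¹)
    · intro s hs
      simp only [Finset.mem_erase, Finset.mem_univ, and_true] at hs ⊢
      intro h
      apply inv_ne_zero hs
      linear_combination h
    · intro w hw
      simp only [Finset.mem_erase, Finset.mem_univ, and_true] at hw ⊢
      exact inv_ne_zero (fun hc => hw (by linear_combination hc))
    · intro s hs
      simp only [Finset.mem_erase, Finset.mem_univ, and_true] at hs
      field_simp
      ring
    · intro w hw
      simp only [Finset.mem_erase, Finset.mem_univ, and_true] at hw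
      have : w + 1 ≠ 0 := fun hc => hw (by linear_combination hc)
      field_simp
      ring
    · intro s hs
      simp only [Finset.mem_erase, Finset.mem_univ, and_true] at hs
      rw [show s⁻¹ - 1 = s⁻¹ * (1 - s) by field_simp, qc_mul, qc_inv]
  have e3 : ∑ w ∈ Finset.univ.erase (-1:F), qc w = -1 := by
    have := Finset.add_sum_erase _ qc (Finset.mem_univ (-1:F))
    rw [qc_sum hodd] at this
    rw [qc_neg_one hsq] at this
    linarith
  rw [e1, e2, e3]

include hodd hsq in
lemma sum_qc_conv {a : F} (ha : a ≠ 0) : ∑ t : F, qc t * qc (a - t) = -1 := by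
  have := Fintype.sum_equiv (Equiv.mulLeft₀ a ha)
    (fun s : F => qc (a * s) * qc (a - a * s)) (fun t : F => qc t * qc (a - t))
    (fun s => rfl)
  rw [← this]
  have e : ∀ s : F, qc (a * s) * qc (a - a * s) = qc s * qc (1 - s) := by
    intro s
    rw [show a - a * s = a * (1 - s) by ring, qc_mul, qc_mul]
    have h2 := qc_sq ha
    calc qc a * qc s * (qc a * qc (1 - s)) = (qc a * qc a) * (qc s * qc (1 - s)) := by ring
    _ = qc s * qc (1 - s) := by rw [h2, one_mul]
  rw [Finset.sum_congr rfl (fun s _ => e s)]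
  exact jacobi hodd hsq

include hsq in
lemma sum_qc_conv_zero : ∑ t : F, qc t * qc ((0:F) - t) = (Fintype.card F : ℚ) - 1 := by
  have e : ∀ t : F, qc t * qc ((0:F) - t) = nu t := by
    intro t
    rw [zero_sub, qc_neg hsq]
    by_cases ht : t = 0
    · simp [ht, qc_zero, nu]
    · rw [qc_sq ht]; simp [nu, ht]
  rw [Finset.sum_congr rfl (fun t _ => e t)]
  exact nu_sum

include hodd hsq in
lemma sum_nu_conv (a : F) : ∑ t : F, nu t * qc (a - t) = -qc a := by
  have e : ∀ t : F, nu t * qc (a - t) = qc (a - t) - (if t = 0 then qc a else 0) := by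
    intro t
    unfold nu
    split_ifs with ht
    · simp [ht]
    · ring
  rw [Finset.sum_congr rfl (fun t _ => e t), Finset.sum_sub_distrib,
    Finset.sum_ite_eq' Finset.univ (0:F) (fun _ => qc a)]
  have : ∑ t : F, qc (a - t) = ∑ t : F, qc t := by
    exact Fintype.sum_equiv (Equiv.subLeft a) _ _ (fun t => rfl)
  rw [this, qc_sum hodd]
  simp

def Pv (r : ℚ) (n : ℕ) : ℕ → ℚ
  | 0 => ((r-1)^n + (-1)^n*(r-1))/r
  | (k+1) => if k % 2 = 0 then 0 else (-1)^n * (r-1) * r^(k/2)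

def Qv (r : ℚ) (n : ℕ) : ℕ → ℚ
  | 0 => ((r-1)^n - (-1)^n)/r
  | (k+1) => (-1)^(n+k+1) * (if k % 2 = 0 then r^(k/2) else -r^(k/2))

lemma neg_one_pow_add_two_mul (n l : ℕ) : ((-1:ℚ))^(n + 2*l) = (-1)^n := by
  rw [pow_add, pow_mul]; norm_num

lemma Pv_zero (r : ℚ) (n : ℕ) : Pv r n 0 = ((r-1)^n + (-1)^n*(r-1))/r := rfl

lemma Qv_zero (r : ℚ) (n : ℕ) : Qv r n 0 = ((r-1)^n - (-1)^n)/r := rfl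

lemma Pv_odd (r : ℚ) (n l : ℕ) : Pv r n (2*l+1) = 0 := by
  have h1 : (2*l) % 2 = 0 := by omega
  simp [Pv, h1]

lemma Pv_even (r : ℚ) (n l : ℕ) : Pv r n (2*l+2) = (-1)^n * (r-1) * r^l := by
  have h1 : (2*l+1) % 2 = 1 := by omega
  have h2 : (2*l+1)/2 = l := by omega
  show Pv r n ((2*l+1)+1) = _
  simp [Pv, h1, h2]

lemma Qv_odd (r : ℚ) (n l : ℕ) : Qv r n (2*l+1) = (-1)^(n+1) * r^l := by
  have h1 : (2*l) % 2 = 0 := by omega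
  have h2 : (2*l)/2 = l := by omega
  show Qv r n ((2*l)+1) = _
  simp only [Qv, h1, h2, if_pos]
  rw [show n + 2*l + 1 = (n+1) + 2*l by omega, neg_one_pow_add_two_mul]

lemma Qv_even (r : ℚ) (n l : ℕ) : Qv r n (2*l+2) = -((-1)^n * r^l) := by
  have h1 : (2*l+1) % 2 = 1 := by omega
  have h2 : (2*l+1)/2 = l := by omega
  show Qv r n ((2*l+1)+1) = _
  simp only [Qv, h1, h2]
  rw [show n + (2*l+1) + 1 = n + 2*(l+1) by omega, neg_one_pow_add_two_mul]
  norm_num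

lemma nu_zero : nu (0:F) = 0 := by simp [nu]

lemma nu_ne {a : F} (ha : a ≠ 0) : nu a = 1 := by simp [nu, ha]


include hodd hsq in
lemma main : ∀ (n : ℕ) (T : Finset (Fin n)) (a : F),
    (∑ y : Fin n → F, if ∑ j, y j = a then ∏ j, (if j ∈ T then qc (y j) else nu (y j)) else 0)
      = if a = 0 then Pv (Fintype.card F) n T.card
        else qc a ^ T.card * Qv (Fintype.card F) n T.card := by
  have hr : (Fintype.card F : ℚ) ≠ 0 := Nat.cast_ne_zero.mpr Fintype.card_ne_zero
  intro n
  induction n with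
  | zero =>
    intro T a
    have hT : T.card = 0 := by simp [Finset.eq_empty_of_isEmpty T]
    rw [hT]
    rw [Fintype.sum_unique]
    simp only [Finset.univ_eq_empty, Finset.sum_empty, Finset.prod_empty, Pv, Qv]
    by_cases ha : a = 0
    · rw [if_pos ha.symm, if_pos ha]
      try rw [← hrdef]
      field_simp
      ring
    · rw [if_neg (fun h => ha h.symm), if_neg ha]
      simp
  | succ n ih =>
    intro T a
    set T' : Finset (Fin n) := Finset.univ.filter (fun j => j.succ ∈ T) with hT'def
    have hcard : T.card = (if (0 : Fin (n+1)) ∈ T then 1 else 0) + T'.card := by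
      have h1 : T = Finset.univ.filter (· ∈ T) := by ext j; simp
      rw [hT'def, Finset.card_filter]
      conv_lhs => rw [h1, Finset.card_filter]
      rw [Fin.sum_univ_succ]
    have e0 : (∑ y : Fin (n+1) → F,
          if ∑ j, y j = a then ∏ j, (if j ∈ T then qc (y j) else nu (y j)) else 0)
        = ∑ t : F, (if (0:Fin (n+1)) ∈ T then qc t else nu t) *
            (if a - t = 0 then Pv (Fintype.card F) n T'.card
             else qc (a-t) ^ T'.card * Qv (Fintype.card F) n T'.card) := by
      rw [← Equiv.sum_comp (Fin.consEquiv (fun _ : Fin (n+1) => F))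
        (fun y : Fin (n+1) → F =>
          if ∑ j, y j = a then ∏ j, (if j ∈ T then qc (y j) else nu (y j)) else 0)]
      rw [Fintype.sum_prod_type]
      apply Finset.sum_congr rfl
      intro t _
      have estep : ∀ x : Fin n → F,
          (if ∑ j, (Fin.consEquiv (fun _ : Fin (n+1) => F)) (t, x) j = a
            then ∏ j, (if j ∈ T then qc ((Fin.consEquiv (fun _ : Fin (n+1) => F)) (t, x) j)
              else nu ((Fin.consEquiv (fun _ : Fin (n+1) => F)) (t, x) j)) else 0)
          = (if (0:Fin (n+1)) ∈ T then qc t else nu t) *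
            (if ∑ j, x j = a - t then ∏ j, (if j ∈ T' then qc (x j) else nu (x j)) else 0) := by
        intro x
        have hc : (Fin.consEquiv (fun _ : Fin (n+1) => F)) (t, x) = Fin.cons t x := rfl
        rw [hc, Fin.sum_univ_succ, Fin.prod_univ_succ]
        simp only [Fin.cons_zero, Fin.cons_succ]
        have hcond : (t + ∑ j, x j = a) ↔ (∑ j, x j = a - t) := by
          constructor <;> intro h <;> linear_combination h
        have hprod : (∏ j : Fin n, if j.succ ∈ T then qc (x j) else nu (x j))
            = ∏ j : Fin n, (if j ∈ T' then qc (x j) else nu (x j)) := by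
          apply Finset.prod_congr rfl
          intro j _
          congr 1
          simp [hT'def]
        rw [hprod]
        by_cases hz : ∑ j, x j = a - t
        · rw [if_pos hz, if_pos (hcond.mpr hz)]
        · rw [if_neg hz, if_neg (fun hh => hz (hcond.mp hh)), mul_zero]
      rw [Finset.sum_congr rfl (fun x _ => estep x), ← Finset.mul_sum]
      congr 1
      exact ih T' (a - t)
    rw [e0, hcard]
    set r : ℚ := (Fintype.card F : ℚ) with hrdef
    set k' : ℕ := T'.card with hk'def
    clear_value k'
    set P' : ℚ := Pv r n k' with hP'def
    set Q' : ℚ := Qv r n k' with hQ'def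
    rw [← Finset.add_sum_erase Finset.univ _ (Finset.mem_univ a)]
    have ha0 : (if a - a = 0 then P' else qc (a-a) ^ k' * Q') = P' := by
      rw [sub_self, if_pos rfl]
    rw [ha0]
    have herase : ∑ t ∈ Finset.univ.erase a,
          (if (0:Fin (n+1)) ∈ T then qc t else nu t) *
            (if a - t = 0 then P' else qc (a-t) ^ k' * Q')
        = ∑ t ∈ Finset.univ.erase a,
          (if (0:Fin (n+1)) ∈ T then qc t else nu t) * (qc (a-t) ^ k' * Q') := by
      apply Finset.sum_congr rfl
      intro t ht
      have hne : a - t ≠ 0 :=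
        sub_ne_zero_of_ne (Ne.symm (Finset.ne_of_mem_erase ht))
      rw [if_neg hne]
    rw [herase]
    clear herase ha0 e0 hcard hT'def ih
    by_cases h0T : (0 : Fin (n+1)) ∈ T
    · simp only [if_pos h0T]
      rcases Nat.mod_two_eq_zero_or_one k' with hk | hk
      · -- head qc, k' even
        have he : ∑ t ∈ Finset.univ.erase a, qc t * (qc (a-t) ^ k' * Q')
            = (- qc a) * Q' := by
          have h4 : ∀ t ∈ Finset.univ.erase a,
              qc t * (qc (a-t) ^ k' * Q') = qc t * Q' := by
            intro t ht
            rw [qc_pow_even (sub_ne_zero_of_ne (Ne.symm (Finset.ne_of_mem_erase ht))) hk,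
              one_mul]
          rw [Finset.sum_congr rfl h4, ← Finset.sum_mul]
          congr 1
          have h3 := Finset.add_sum_erase Finset.univ qc (Finset.mem_univ a)
          rw [qc_sum hodd] at h3
          linarith
        rw [he]
        rcases k' with _ | k2
        · by_cases ha : a = 0
          · rw [if_pos ha, ha, qc_zero]
            rw [show 1 + 0 = 2*0+1 by omega, Pv_odd]
            norm_num
          · rw [if_neg ha, hP'def, hQ'def, Pv_zero, Qv_zero]
            rw [show 1 + 0 = 2*0+1 by omega, Qv_odd, qc_pow_odd ha (by omega)]
            try rw [← hrdef]
            field_simp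
            ring
        · obtain ⟨l, rfl⟩ : ∃ l, k2 = 2*l+1 := ⟨k2/2, by omega⟩
          by_cases ha : a = 0
          · rw [if_pos ha, ha, qc_zero]
            rw [show 1 + (2*l+1+1) = 2*(l+1)+1 by omega, Pv_odd]
            norm_num
          · rw [if_neg ha, hP'def, hQ'def,
              show (2*l+1+1) = 2*l+2 by omega, Pv_even, Qv_even]
            rw [show 1 + (2*l+2) = 2*(l+1)+1 by omega, Qv_odd, qc_pow_odd ha (by omega)]
            rw [show r^(l+1) = r^l * r by ring]
            try rw [← hrdef]
            ring
      · -- head qc, k' odd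
        obtain ⟨l, rfl⟩ : ∃ l, k' = 2*l+1 := ⟨k'/2, by omega⟩
        have he : ∑ t ∈ Finset.univ.erase a, qc t * (qc (a-t) ^ (2*l+1) * Q')
            = (∑ t : F, qc t * qc (a-t)) * Q' := by
          have h4 : ∀ t ∈ Finset.univ.erase a,
              qc t * (qc (a-t) ^ (2*l+1) * Q') = (qc t * qc (a-t)) * Q' := by
            intro t ht
            rw [qc_pow_odd (sub_ne_zero_of_ne (Ne.symm (Finset.ne_of_mem_erase ht)))
              (by omega)]
            try rw [← hrdef]
            ring
          rw [Finset.sum_congr rfl h4, ← Finset.sum_mul]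
          congr 1
          have h3 := Finset.add_sum_erase Finset.univ (fun t => qc t * qc (a-t))
            (Finset.mem_univ a)
          simp only [sub_self, qc_zero, mul_zero, zero_add] at h3
          exact h3
        rw [he]
        by_cases ha : a = 0
        · rw [if_pos ha, ha, qc_zero, sum_qc_conv_zero hsq, hP'def, hQ'def, Qv_odd]
          rw [show 1 + (2*l+1) = 2*l+2 by omega, Pv_even]
          try rw [← hrdef]
          ring
        · rw [if_neg ha, sum_qc_conv hodd hsq ha, hP'def, hQ'def, Pv_odd, Qv_odd]
          rw [show 1 + (2*l+1) = 2*l+2 by omega, Qv_even, qc_pow_even ha (by omega)]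
          try rw [← hrdef]
          ring
    · simp only [if_neg h0T, Nat.zero_add]
      rcases Nat.mod_two_eq_zero_or_one k' with hk | hk
      · -- head nu, k' even
        have he : ∑ t ∈ Finset.univ.erase a, nu t * (qc (a-t) ^ k' * Q')
            = ((r - 1) - nu a) * Q' := by
          have h4 : ∀ t ∈ Finset.univ.erase a,
              nu t * (qc (a-t) ^ k' * Q') = nu t * Q' := by
            intro t ht
            rw [qc_pow_even (sub_ne_zero_of_ne (Ne.symm (Finset.ne_of_mem_erase ht))) hk,
              one_mul]
          rw [Finset.sum_congr rfl h4, ← Finset.sum_mul]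
          congr 1
          have h3 := Finset.add_sum_erase Finset.univ nu (Finset.mem_univ a)
          rw [nu_sum] at h3
          rw [← hrdef] at h3
          linarith
        rw [he]
        rcases k' with _ | k2
        · by_cases ha : a = 0
          · rw [if_pos ha, ha, nu_zero, hP'def, hQ'def, Pv_zero, Qv_zero, Pv_zero]
            try rw [← hrdef]
            field_simp
            ring
          · rw [if_neg ha, nu_ne ha, hP'def, hQ'def, Pv_zero, Qv_zero, Qv_zero, pow_zero]
            try rw [← hrdef]
            field_simp
            ring
        · obtain ⟨l, rfl⟩ : ∃ l, k2 = 2*l+1 := ⟨k2/2, by omega⟩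
          rw [show (2*l+1+1) = 2*l+2 by omega]
          by_cases ha : a = 0
          · rw [if_pos ha, ha, nu_zero, hP'def, hQ'def, Pv_even, Qv_even, Pv_even]
            try rw [← hrdef]
            ring
          · rw [if_neg ha, nu_ne ha, hP'def, hQ'def, Pv_even, Qv_even, Qv_even,
              qc_pow_even ha (by omega)]
            try rw [← hrdef]
            ring
      · -- head nu, k' odd
        obtain ⟨l, rfl⟩ : ∃ l, k' = 2*l+1 := ⟨k'/2, by omega⟩
        have he : ∑ t ∈ Finset.univ.erase a, nu t * (qc (a-t) ^ (2*l+1) * Q')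
            = (- qc a) * Q' := by
          have h4 : ∀ t ∈ Finset.univ.erase a,
              nu t * (qc (a-t) ^ (2*l+1) * Q') = (nu t * qc (a-t)) * Q' := by
            intro t ht
            rw [qc_pow_odd (sub_ne_zero_of_ne (Ne.symm (Finset.ne_of_mem_erase ht)))
              (by omega)]
            try rw [← hrdef]
            ring
          rw [Finset.sum_congr rfl h4, ← Finset.sum_mul]
          congr 1
          have h3 := Finset.add_sum_erase Finset.univ (fun t => nu t * qc (a-t))
            (Finset.mem_univ a)
          simp only [sub_self, qc_zero, mul_zero, zero_add] at h3
          rw [sum_nu_conv hodd hsq a] at h3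
          exact h3
        rw [he]
        by_cases ha : a = 0
        · rw [if_pos ha, ha, qc_zero, nu_zero, hP'def, Pv_odd, Pv_odd]
          try rw [← hrdef]
          ring
        · rw [if_neg ha, nu_ne ha, hP'def, hQ'def, Pv_odd, Qv_odd, Qv_odd,
            qc_pow_odd ha (by omega)]
          try rw [← hrdef]
          ring

lemma nu_neg (y : F) : nu (-y) = nu y := by simp [nu]

include hodd hsq in
lemma NT (u : ℕ) (T : Finset (Fin (u+1))) :
    (∑ x : Fin u → F, ∏ j : Fin (u+1),
        (if j ∈ T then qc ((Fin.snoc x (∑ jj, x jj) : Fin (u+1) → F) j)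
         else nu ((Fin.snoc x (∑ jj, x jj) : Fin (u+1) → F) j)))
      = Pv (Fintype.card F) (u+1) T.card := by
  have h := main hodd hsq (u+1) T 0
  rw [if_pos rfl] at h
  rw [← h]
  rw [← Equiv.sum_comp (Fin.snocEquiv (fun _ : Fin (u+1) => F))
    (fun y : Fin (u+1) → F =>
      if ∑ j, y j = 0 then ∏ j, (if j ∈ T then qc (y j) else nu (y j)) else 0)]
  rw [Fintype.sum_prod_type]
  rw [Finset.sum_comm]
  apply Finset.sum_congr rfl
  intro x _
  have hsnoc : ∀ t : F, (Fin.snocEquiv (fun _ : Fin (u+1) => F)) (t, x) = Fin.snoc x t :=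
    fun t => rfl
  have hsum : ∀ t : F, (∑ j, (Fin.snoc x t : Fin (u+1) → F) j) = (∑ j, x j) + t := by
    intro t
    rw [Fin.sum_univ_castSucc]
    simp [Fin.snoc_castSucc, Fin.snoc_last]
  have e1 : ∀ t : F,
      (if ∑ j, ((Fin.snocEquiv (fun _ : Fin (u+1) => F)) (t, x)) j = 0
        then ∏ j, (if j ∈ T then qc (((Fin.snocEquiv (fun _ : Fin (u+1) => F)) (t, x)) j)
          else nu (((Fin.snocEquiv (fun _ : Fin (u+1) => F)) (t, x)) j)) else 0)
      = (if t = -(∑ j, x j)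
          then ∏ j, (if j ∈ T then qc ((Fin.snoc x t : Fin (u+1) → F) j)
            else nu ((Fin.snoc x t : Fin (u+1) → F) j)) else 0) := by
    intro t
    rw [hsnoc, hsum]
    apply if_congr _ rfl rfl
    constructor <;> intro hh <;> linear_combination hh
  rw [Finset.sum_congr rfl (fun t _ => e1 t)]
  rw [Finset.sum_ite_eq' Finset.univ (-(∑ j, x j))
    (fun t => ∏ j, (if j ∈ T then qc ((Fin.snoc x t : Fin (u+1) → F) j)
      else nu ((Fin.snoc x t : Fin (u+1) → F) j))), if_pos (Finset.mem_univ _)]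
  rw [Fin.prod_univ_castSucc, Fin.prod_univ_castSucc]
  simp only [Fin.snoc_castSucc, Fin.snoc_last]
  congr 1
  by_cases hT : Fin.last u ∈ T
  · rw [if_pos hT, if_pos hT, qc_neg hsq]
  · rw [if_neg hT, if_neg hT, nu_neg]

lemma ind_eq (c : Fin 2) (y : F) [Decidable (inClass y c)] :
    (if inClass y c then (1:ℚ) else 0) = (1/2) * (nu y + (-1)^(c:ℕ) * qc y) := by
  unfold inClass nu
  rw [qc_eq]
  by_cases hy : y = 0
  · simp [hy]
  · by_cases hs : IsSquare y
    · fin_cases c <;> simp [hy, hs] <;> norm_num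
    · fin_cases c <;> simp [hy, hs] <;> norm_num

end Stmt19

theorem stmt_19 (F : Type*) [Field F] [Fintype F]
    (hodd : Odd (Fintype.card F)) (hsq : IsSquare (-1 : F))
    (u : ℕ) (hu : 1 ≤ u) (i : Fin (u + 1) → Fin 2) :
    (Set.ncard {x : Fin u → F |
        (∀ j : Fin u, inClass (x j) (i j.castSucc)) ∧
          inClass (∑ j, x j) (i (Fin.last u))} : ℚ) =
      ((Fintype.card F : ℚ) - 1) / 2 ^ (u + 1) *
        ((((Fintype.card F : ℚ) - 1) ^ u - (-1) ^ u) / (Fintype.card F : ℚ) -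
          (-1) ^ u *
            ∑ l ∈ Finset.Icc 1 ((u + 1) / 2),
              (Fintype.card F : ℚ) ^ (l - 1) *
                ∑ T ∈ Finset.powersetCard (2 * l) (Finset.univ : Finset (Fin (u + 1))),
                  (-1 : ℚ) ^ (∑ j ∈ T, ((i j : ℕ)))) := by
  classical
  open Stmt19 in
  set r : ℚ := (Fintype.card F : ℚ) with hrdef
  have hr : r ≠ 0 := Nat.cast_ne_zero.mpr Fintype.card_ne_zero
  set P : (Fin u → F) → Prop := fun x =>
    (∀ j : Fin u, inClass (x j) (i j.castSucc)) ∧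
      inClass (∑ j, x j) (i (Fin.last u)) with hPdef
  have h1 : (Set.ncard {x : Fin u → F | P x} : ℚ)
      = ∑ x : Fin u → F, (if P x then (1:ℚ) else 0) := by
    have e : {x : Fin u → F | P x} = ((Finset.univ.filter P : Finset (Fin u → F)) : Set (Fin u → F)) := by
      ext x; simp
    rw [e, Set.ncard_coe_finset, Finset.sum_boole]
  have h2 : ∀ x : Fin u → F, (if P x then (1:ℚ) else 0)
      = ∏ j : Fin (u+1), ((1:ℚ)/2) *
          (nu ((Fin.snoc x (∑ jj, x jj) : Fin (u+1) → F) j)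
            + (-1)^((i j : ℕ)) * qc ((Fin.snoc x (∑ jj, x jj) : Fin (u+1) → F) j)) := by
    intro x
    have ec : (if P x then (1:ℚ) else 0)
        = (∏ j : Fin u, if inClass (x j) (i j.castSucc) then (1:ℚ) else 0) *
          (if inClass (∑ j, x j) (i (Fin.last u)) then (1:ℚ) else 0) := by
      rw [Finset.prod_boole]
      by_cases hA : ∀ j : Fin u, inClass (x j) (i j.castSucc) <;>
        by_cases hB : inClass (∑ j, x j) (i (Fin.last u)) <;>
        simp [hPdef, hA, hB]
    rw [ec, Fin.prod_univ_castSucc]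
    simp only [Fin.snoc_castSucc, Fin.snoc_last]
    congr 1
    · exact Finset.prod_congr rfl (fun j _ => ind_eq (i j.castSucc) (x j))
    · exact ind_eq (i (Fin.last u)) (∑ j, x j)
  rw [h1, Finset.sum_congr rfl (fun x _ => h2 x)]
  have h3 : ∀ x : Fin u → F,
      (∏ j : Fin (u+1), ((1:ℚ)/2) *
        (nu ((Fin.snoc x (∑ jj, x jj) : Fin (u+1) → F) j)
          + (-1)^((i j : ℕ)) * qc ((Fin.snoc x (∑ jj, x jj) : Fin (u+1) → F) j)))
      = ((1:ℚ)/2)^(u+1) * ∑ T ∈ Finset.univ.powerset,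
          (∏ j ∈ T, ((-1:ℚ)^((i j : ℕ)) * qc ((Fin.snoc x (∑ jj, x jj) : Fin (u+1) → F) j)))
          * ∏ j ∈ Finset.univ \ T, nu ((Fin.snoc x (∑ jj, x jj) : Fin (u+1) → F) j) := by
    intro x
    rw [Finset.prod_mul_distrib, Finset.prod_const, Finset.card_univ, Fintype.card_fin]
    congr 1
    rw [← Finset.prod_add]
    exact Finset.prod_congr rfl (fun j _ => by ring)
  rw [Finset.sum_congr rfl (fun x _ => h3 x), ← Finset.mul_sum, Finset.sum_comm]
  have h4 : ∀ T ∈ Finset.univ.powerset,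
      (∑ x : Fin u → F,
        (∏ j ∈ T, ((-1:ℚ)^((i j : ℕ)) * qc ((Fin.snoc x (∑ jj, x jj) : Fin (u+1) → F) j)))
          * ∏ j ∈ Finset.univ \ T, nu ((Fin.snoc x (∑ jj, x jj) : Fin (u+1) → F) j))
      = (-1:ℚ)^(∑ j ∈ T, ((i j : ℕ))) * Pv r (u+1) T.card := by
    intro T _
    rw [← NT hodd hsq u T, Finset.mul_sum]
    apply Finset.sum_congr rfl
    intro x _
    rw [Finset.prod_mul_distrib, Finset.prod_pow_eq_pow_sum]
    rw [mul_assoc]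
    congr 1
    rw [Finset.prod_ite]
    congr 1
    · apply Finset.prod_congr _ (fun _ _ => rfl)
      ext j; simp
    · apply Finset.prod_congr _ (fun _ _ => rfl)
      ext j; simp
  rw [Finset.sum_congr rfl h4]
  rw [Finset.sum_powerset]
  rw [Finset.card_univ, Fintype.card_fin]
  have hcardfix : ∀ k ∈ Finset.range (u+1+1),
      (∑ T ∈ Finset.powersetCard k (Finset.univ : Finset (Fin (u+1))),
        ((-1:ℚ)^(∑ j ∈ T, ((i j : ℕ)))) * Pv r (u+1) T.card)
      = ∑ T ∈ Finset.powersetCard k (Finset.univ : Finset (Fin (u+1))),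
        ((-1:ℚ)^(∑ j ∈ T, ((i j : ℕ)))) * Pv r (u+1) k := by
    intro k _
    apply Finset.sum_congr rfl
    intro T hT
    rw [(Finset.mem_powersetCard.mp hT).2]
  rw [Finset.sum_congr rfl hcardfix]
  have h0mem : (0:ℕ) ∉ (Finset.Icc 1 ((u+1)/2)).image (fun l => 2*l) := by
    simp
  have hinj : ∀ a ∈ Finset.Icc 1 ((u+1)/2), ∀ b ∈ Finset.Icc 1 ((u+1)/2),
      2*a = 2*b → a = b := fun a _ b _ h => by omega
  have hsub : insert 0 ((Finset.Icc 1 ((u+1)/2)).image (fun l => 2*l))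
      ⊆ Finset.range (u+1+1) := by
    intro k hk
    simp only [Finset.mem_insert, Finset.mem_image, Finset.mem_Icc] at hk
    rcases hk with rfl | ⟨l, hl, rfl⟩
    · simp
    · simp only [Finset.mem_range]; omega
  have hzero : ∀ k ∈ Finset.range (u+1+1),
      k ∉ insert 0 ((Finset.Icc 1 ((u+1)/2)).image (fun l => 2*l)) →
      (∑ T ∈ Finset.powersetCard k (Finset.univ : Finset (Fin (u+1))),
        (-1:ℚ)^(∑ j ∈ T, ((i j : ℕ))) * Pv r (u+1) k) = 0 := by
    intro k hk hns
    simp only [Finset.mem_insert, Finset.mem_image, Finset.mem_Icc, not_or, not_exists] at hns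
    simp only [Finset.mem_range] at hk
    have hodd' : k % 2 = 1 := by
      rcases Nat.mod_two_eq_zero_or_one k with h | h
      · exfalso
        have hk2 : k = 2 * (k / 2) := by omega
        exact (hns.2 (k/2)) ⟨by omega, by omega⟩
      · exact h
    obtain ⟨m, rfl⟩ : ∃ m, k = 2*m+1 := ⟨k/2, by omega⟩
    rw [Pv_odd]
    simp
  rw [← Finset.sum_subset hsub hzero, Finset.sum_insert h0mem,
    Finset.sum_image hinj]
  have hg0 : (∑ T ∈ Finset.powersetCard 0 (Finset.univ : Finset (Fin (u+1))),
      (-1:ℚ)^(∑ j ∈ T, ((i j : ℕ))) * Pv r (u+1) 0) = Pv r (u+1) 0 := by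
    rw [Finset.powersetCard_zero, Finset.sum_singleton]
    simp
  rw [hg0]
  have hgl : ∀ l ∈ Finset.Icc 1 ((u+1)/2),
      (∑ T ∈ Finset.powersetCard (2*l) (Finset.univ : Finset (Fin (u+1))),
        (-1:ℚ)^(∑ j ∈ T, ((i j : ℕ))) * Pv r (u+1) (2*l))
      = ((-1)^(u+1) * (r-1)) * (r^(l-1) *
          ∑ T ∈ Finset.powersetCard (2*l) (Finset.univ : Finset (Fin (u+1))),
            (-1:ℚ)^(∑ j ∈ T, ((i j : ℕ)))) := by
    intro l hl
    simp only [Finset.mem_Icc] at hl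
    rw [show 2*l = 2*(l-1)+2 by omega, Pv_even, ← Finset.sum_mul]
    ring
  rw [Finset.sum_congr rfl hgl, ← Finset.mul_sum]
  rw [Pv_zero]
  generalize (∑ l ∈ Finset.Icc 1 ((u+1)/2), r^(l-1) *
      ∑ T ∈ Finset.powersetCard (2*l) (Finset.univ : Finset (Fin (u+1))),
        (-1:ℚ)^(∑ j ∈ T, ((i j : ℕ)))) = X
  have h2ne : ((2:ℚ))^(u+1) ≠ 0 := by positivity
  field_simp
  have hh : (1/2:ℚ)^u * 2^u = 1 := by rw [← mul_pow]; norm_num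
  linear_combination (r * X * (-1) ^ u - r * (-1) ^ u + r * (-1 + r) ^ u - r ^ 2 * X * (-1) ^ u + (-1) ^ u - (-1 + r) ^ u) * hh
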